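/- Let Φ be a t-uniform purified code state, T ⊆ {1,…,n} with |T| = t, and U a T-standard-form unitary for Φ. Identify ℂ^{Q^k} ⊗ (ℂ^Q)^{⊗(n−t−1)} with ℂ^{Q^{t−1}} and define, for each s' ∈ {0,…,Q−1}^{t−1}, the vector ω_{s'} := Q^{−1/2} Σ_{r ∈ {0,…,Q−1}} U(e_{s'} ⊗ e_r) ⊗ e_r ∈ (ℂ^Q)^{⊗(t+1)}. Then {ω_{s'}} is an orthonormal family, and for every position p ∈ {1,…,t+1} and every Q×Q complex matrix γ there exists a scalar c(γ,p), independent of s' and s'', such that ⟨ω_{s'}, Γ ω_{s''}⟩ = c(γ,p)·δ_{s',s''}, where Γ acts as γ on the p-th qudit and as the identity on all other qudits. Consequently the span of {ω_{s'}} is a [[t+1, t−1]]_Q quantum code of distance 2, i.e., a quantum MDS code (Lemma 2.6). -/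

import Mathlib

open scoped BigOperators

noncomputable section

/-- Combine an assignment on `A` with an assignment on the complement of `A`
into a full computational-basis string. -/
def mergeOn {n Q : ℕ} (A : Finset (Fin n)) (u : {i // i ∈ A} → Fin Q)
    (v : {i // i ∉ A} → Fin Q) : Fin n → Fin Q :=
  fun i => if h : i ∈ A then u ⟨i, h⟩ else v ⟨i, h⟩

/-- Reduced density matrix of a purified code state `Φ` on the qudits in `A`
(the reference register and the qudits outside `A` are traced out). -/
def rdm {Q k n : ℕ} (Φ : (Fin k → Fin Q) → (Fin n → Fin Q) → ℂ)
    (A : Finset (Fin n)) :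
    Matrix ({i // i ∈ A} → Fin Q) ({i // i ∈ A} → Fin Q) ℂ :=
  Matrix.of fun u v => ∑ s : Fin k → Fin Q, ∑ w : {i // i ∉ A} → Fin Q,
    Φ s (mergeOn A u w) * (starRingEnd ℂ) (Φ s (mergeOn A v w))

/-- `Φ` is `t`-uniform: every set of `t` qudits is maximally mixed. -/
def TUniform {Q k n : ℕ} (t : ℕ)
    (Φ : (Fin k → Fin Q) → (Fin n → Fin Q) → ℂ) : Prop :=
  ∀ A : Finset (Fin n), A.card = t →
    rdm Φ A = ((Q : ℂ) ^ t)⁻¹ •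
      (1 : Matrix ({i // i ∈ A} → Fin Q) ({i // i ∈ A} → Fin Q) ℂ)


/-- The codewords `ω_{s'} = Q^{-1/2} Σ_r U(e_{s'} ⊗ e_r) ⊗ e_r` of the induced
`[[t+1, t-1]]_Q` code, written in amplitude form.  Here `ℂ^{Q^k} ⊗ (ℂ^Q)^{⊗(n-t-1)}` is
identified with `ℂ^{Q^{t-1}}`, so `s' : Fin (t-1) → Fin Q`, and the column index
`(s', r)` of `U` is encoded by `Fin.snoc`. -/
def omegaVec {Q t : ℕ} (ht : 1 < t) (U : Matrix (Fin t → Fin Q) (Fin t → Fin Q) ℂ)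
    (s' : Fin (t - 1) → Fin Q) : (Fin (t + 1) → Fin Q) → ℂ :=
  fun v => (Real.sqrt (Q : ℝ) : ℂ)⁻¹ *
    U (fun i => v i.castSucc)
      (fun i => Fin.snoc (α := fun _ => Fin Q) s' (v (Fin.last t)) (Fin.cast (by omega : t = t - 1 + 1) i))

/-! ### Auxiliary definitions -/


def colFun {Q t : ℕ} (ht : 1 < t) (s' : Fin (t - 1) → Fin Q) (r : Fin Q) : Fin t → Fin Q :=
  fun i => Fin.snoc (α := fun _ => Fin Q) s' r (Fin.cast (by omega : t = t - 1 + 1) i)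

def embq {t : ℕ} (ht : 1 < t) (q : Fin t) (j : Fin (t - 1)) : Fin t :=
  Fin.cast (by omega : t - 1 + 1 = t) ((Fin.cast (by omega : t = t - 1 + 1) q).succAbove j)

def encq {Q t : ℕ} (ht : 1 < t) (q : Fin t) (x : Fin Q) (c : Fin (t - 1) → Fin Q) : Fin t → Fin Q :=
  fun i => Fin.insertNth (α := fun _ => Fin Q) (Fin.cast (by omega : t = t - 1 + 1) q) x c
    (Fin.cast (by omega : t = t - 1 + 1) i)

def Utilde {Q t : ℕ} (ht : 1 < t) (q : Fin t) (U : Matrix (Fin t → Fin Q) (Fin t → Fin Q) ℂ) :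
    Matrix (Fin t → Fin Q) (Fin t → Fin Q) ℂ :=
  Matrix.of fun w z => U (Function.update w q (z q)) (colFun ht (z ∘ embq ht q) (w q))

/-! ### Small lemmas -/

lemma colFun_inj {Q t : ℕ} (ht : 1 < t) (s₁ s₂ : Fin (t - 1) → Fin Q) (r₁ r₂ : Fin Q) :
    colFun ht s₁ r₁ = colFun ht s₂ r₂ ↔ s₁ = s₂ ∧ r₁ = r₂ := by
  constructor
  · intro h
    constructor
    · funext j
      have := congr_fun h (Fin.cast (by omega : t - 1 + 1 = t) j.castSucc)
      simpa [colFun, Fin.cast_cast] using this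
    · have := congr_fun h (Fin.cast (by omega : t - 1 + 1 = t) (Fin.last (t - 1)))
      simpa [colFun, Fin.cast_cast] using this
  · rintro ⟨rfl, rfl⟩; rfl

lemma encq_q {Q t : ℕ} (ht : 1 < t) (q : Fin t) (x : Fin Q) (c : Fin (t - 1) → Fin Q) :
    encq ht q x c q = x := by
  simp [encq]

lemma encq_emb {Q t : ℕ} (ht : 1 < t) (q : Fin t) (x : Fin Q) (c : Fin (t - 1) → Fin Q)
    (j : Fin (t - 1)) : encq ht q x c (embq ht q j) = c j := by
  simp [encq, embq, Fin.cast_cast]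

lemma embq_ne {t : ℕ} (ht : 1 < t) (q : Fin t) (j : Fin (t - 1)) : embq ht q j ≠ q := by
  simp only [embq]
  intro h
  apply Fin.succAbove_ne (Fin.cast (by omega : t = t - 1 + 1) q) j
  apply Fin.ext
  have := congr_arg Fin.val h
  simpa using this

lemma eq_q_or_embq {t : ℕ} (ht : 1 < t) (q : Fin t) (i : Fin t) :
    i = q ∨ ∃ j, i = embq ht q j := by
  by_cases h : i = q
  · exact Or.inl h
  · right
    have h' : Fin.cast (by omega : t = t - 1 + 1) i ≠ Fin.cast (by omega : t = t - 1 + 1) q := by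
      intro hh; apply h; apply Fin.ext; have := congr_arg Fin.val hh; simpa using this
    obtain ⟨j, hj⟩ := Fin.exists_succAbove_eq h'
    exact ⟨j, by apply Fin.ext; have := congr_arg Fin.val hj; simpa [embq] using this.symm⟩

lemma encq_inj {Q t : ℕ} (ht : 1 < t) (q : Fin t) (x m : Fin Q) (c c' : Fin (t - 1) → Fin Q) :
    encq ht q x c = encq ht q m c' ↔ x = m ∧ c = c' := by
  constructor
  · intro h
    refine ⟨?_, funext fun j => ?_⟩
    · have := congr_fun h q; simpa [encq_q] using this
    · have := congr_fun h (embq ht q j); simpa [encq_emb] using this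
  · rintro ⟨rfl, rfl⟩; rfl

lemma col_orth {Q t : ℕ} (U : Matrix (Fin t → Fin Q) (Fin t → Fin Q) ℂ)
    (hU : U ∈ Matrix.unitaryGroup (Fin t → Fin Q) ℂ) (c c' : Fin t → Fin Q) :
    ∑ u : Fin t → Fin Q, (starRingEnd ℂ) (U u c) * U u c' = if c = c' then 1 else 0 := by
  have h : star U * U = 1 := Matrix.mem_unitaryGroup_iff'.mp hU
  have := congr_fun (congr_fun h c) c'
  simpa [Matrix.mul_apply, Matrix.one_apply, Matrix.star_apply] using this

lemma row_orth {Q t : ℕ} (M : Matrix (Fin t → Fin Q) (Fin t → Fin Q) ℂ)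
    (hU : M * M.conjTranspose = 1) (z z' : Fin t → Fin Q) :
    ∑ w : Fin t → Fin Q, (starRingEnd ℂ) (M w z) * M w z' = if z = z' then 1 else 0 := by
  have h : M.conjTranspose * M = 1 := mul_eq_one_comm.mp hU
  have := congr_fun (congr_fun h z) z'
  simpa [Matrix.mul_apply, Matrix.one_apply, Matrix.conjTranspose_apply] using this

lemma sum_snoc {Q t : ℕ} (F : (Fin (t + 1) → Fin Q) → ℂ) :
    ∑ v : Fin (t + 1) → Fin Q, F v
      = ∑ p : (Fin t → Fin Q) × Fin Q, F (Fin.snoc (α := fun _ => Fin Q) p.1 p.2) := by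
  refine (Fintype.sum_bijective
    (fun p : (Fin t → Fin Q) × Fin Q => Fin.snoc (α := fun _ => Fin Q) p.1 p.2) ?_
    _ _ (fun p => rfl)).symm
  rw [Function.bijective_iff_has_inverse]
  refine ⟨fun v => (fun i => v i.castSucc, v (Fin.last t)), ?_, ?_⟩
  · rintro ⟨u, r⟩
    simp
  · intro v
    exact funext fun i => by
      induction i using Fin.lastCases with
      | last => simp
      | cast j => simp

lemma update_snoc_last {Q t : ℕ} (u : Fin t → Fin Q) (r m : Fin Q) :
    Function.update (Fin.snoc (α := fun _ => Fin Q) u r) (Fin.last t) m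
      = Fin.snoc (α := fun _ => Fin Q) u m := by
  funext i
  induction i using Fin.lastCases with
  | last => simp
  | cast j => simp [Function.update_of_ne (Fin.castSucc_lt_last j).ne]

lemma update_snoc_castSucc {Q t : ℕ} (u : Fin t → Fin Q) (r m : Fin Q) (q : Fin t) :
    Function.update (Fin.snoc (α := fun _ => Fin Q) u r) q.castSucc m
      = Fin.snoc (α := fun _ => Fin Q) (Function.update u q m) r := by
  funext i
  induction i using Fin.lastCases with
  | last => simp [Function.update_of_ne (Fin.castSucc_lt_last q).ne']
  | cast j =>
    by_cases hj : j = q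
    · subst hj; simp
    · simp [Function.update_of_ne (fun h => hj (Fin.castSucc_injective _ h)),
        Function.update_of_ne hj]

lemma sqrt_inv_mul {Q : ℕ} : ((Real.sqrt (Q : ℝ) : ℝ) : ℂ)⁻¹ * ((Real.sqrt (Q : ℝ) : ℝ) : ℂ)⁻¹
    = ((Q : ℕ) : ℂ)⁻¹ := by
  rw [← mul_inv, ← Complex.ofReal_mul, Real.mul_self_sqrt (by positivity)]
  push_cast; ring

lemma sqrt_pow_inv_mul {Q t : ℕ} :
    ((Real.sqrt ((Q : ℝ) ^ t) : ℝ) : ℂ)⁻¹ * ((Real.sqrt ((Q : ℝ) ^ t) : ℝ) : ℂ)⁻¹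
    = (((Q : ℂ)) ^ t)⁻¹ := by
  rw [← mul_inv, ← Complex.ofReal_mul, Real.mul_self_sqrt (by positivity)]
  push_cast; ring

lemma conj_real_inv (r : ℝ) : (starRingEnd ℂ) ((r : ℂ))⁻¹ = ((r : ℂ))⁻¹ := by
  rw [map_inv₀, Complex.conj_ofReal]

lemma kl_combined {ι σ : Type*} [Fintype ι] [DecidableEq σ] {Q : ℕ}
    (γ : Matrix (Fin Q) (Fin Q) ℂ) (V : ι → Fin Q → σ → ℂ) (cst : ℂ)
    (horth : ∀ (x m : Fin Q) (a b : σ),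
      ∑ w : ι, (starRingEnd ℂ) (V w x a) * V w m b = if x = m ∧ a = b then 1 else 0)
    (s' s'' : σ) :
    ∑ p : ι × Fin Q, cst * ∑ m : Fin Q,
        γ p.2 m * ((starRingEnd ℂ) (V p.1 p.2 s') * V p.1 m s'')
      = if s' = s'' then cst * ∑ x : Fin Q, γ x x else 0 := by
  classical
  calc ∑ p : ι × Fin Q, cst * ∑ m : Fin Q,
        γ p.2 m * ((starRingEnd ℂ) (V p.1 p.2 s') * V p.1 m s'')
      = cst * ∑ p : ι × Fin Q, ∑ m : Fin Q,
          γ p.2 m * ((starRingEnd ℂ) (V p.1 p.2 s') * V p.1 m s'') := by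
        rw [Finset.mul_sum]
    _ = cst * ∑ x : Fin Q, ∑ m : Fin Q, ∑ w : ι,
          γ x m * ((starRingEnd ℂ) (V w x s') * V w m s'') := by
        congr 1
        rw [Fintype.sum_prod_type, Finset.sum_comm]
        exact Finset.sum_congr rfl fun x _ => Finset.sum_comm
    _ = cst * ∑ x : Fin Q, ∑ m : Fin Q,
          γ x m * (if x = m ∧ s' = s'' then 1 else 0) := by
        congr 1
        refine Finset.sum_congr rfl fun x _ => Finset.sum_congr rfl fun m _ => ?_
        rw [← Finset.mul_sum, horth]
    _ = if s' = s'' then cst * ∑ x : Fin Q, γ x x else 0 := by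
        by_cases h : s' = s''
        · simp [h]
        · simp [h]
def decFun {Q t n : ℕ} (T : Finset (Fin n)) (hT : T.card = t) (A : Finset (Fin n)) (q : Fin t)
    (w : Fin t → Fin Q) : {i // i ∈ A} → Fin Q :=
  fun i => if h : (i : Fin n) ∈ T then w ((T.orderIsoOfFin hT).symm ⟨i, h⟩) else w q

def gFun {Q t n k : ℕ} (ht : 1 < t) (hkt1 : k ≤ t - 1) (T : Finset (Fin n))
    (hTc : Tᶜ.card = n - t) (A : Finset (Fin n)) (q : Fin t) (z : Fin t → Fin Q) :
    (Fin k → Fin Q) × ({i // i ∉ A} → Fin Q) :=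
  (fun i => z (embq ht q (Fin.castLE hkt1 i)),
   fun i => if h : (i : Fin n) ∈ Tᶜ then
      (if hj : k + ((Tᶜ.orderIsoOfFin hTc).symm ⟨i, h⟩ : Fin (n - t)).val < t - 1
        then z (embq ht q ⟨k + ((Tᶜ.orderIsoOfFin hTc).symm ⟨i, h⟩ : Fin (n - t)).val, hj⟩)
        else z q)
    else z q)

set_option maxHeartbeats 1600000 in
lemma Utilde_unitary (Q t n : ℕ) (hQ : 2 ≤ Q) (ht : 1 < t) (htn : t < n) (hn : n ≤ 2 * t)
    (k : ℕ) (hk : k = 2 * t - n)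
    (Φ : (Fin k → Fin Q) → (Fin n → Fin Q) → ℂ)
    (huniform : TUniform t Φ)
    (T : Finset (Fin n)) (hT : T.card = t) (hTc : Tᶜ.card = n - t)
    (U : Matrix (Fin t → Fin Q) (Fin t → Fin Q) ℂ)
    (hUstd : ∀ (s : Fin k → Fin Q) (w : Fin n → Fin Q),
      Φ s w = (Real.sqrt ((Q : ℝ) ^ t) : ℂ)⁻¹ *
        U (fun i => w (T.orderEmbOfFin hT i))
          (fun i => Fin.append s (fun j => w (Tᶜ.orderEmbOfFin hTc j))
            (Fin.cast (by have := htn; omega : t = k + (n - t)) i)))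
    (q : Fin t) :
    Utilde ht q U * (Utilde ht q U).conjTranspose = 1 := by
  classical
  have hkn : k = 2 * t - n := hk
  have hkt1 : k ≤ t - 1 := by omega
  have hQt0 : ((Q : ℂ) ^ t) ≠ 0 := pow_ne_zero _ (by exact_mod_cast (by omega : Q ≠ 0))
  -- the distinguished positions
  set a : Fin n := T.orderEmbOfFin hT q with ha_def
  have hbIdx : n - t - 1 < n - t := by omega
  set bIdx : Fin (n - t) := ⟨n - t - 1, hbIdx⟩ with hbIdx_def
  set b : Fin n := Tᶜ.orderEmbOfFin hTc bIdx with hb_def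
  have haT : a ∈ T := Finset.orderEmbOfFin_mem T hT q
  have hbTc : b ∈ Tᶜ := Finset.orderEmbOfFin_mem Tᶜ hTc bIdx
  have hbT : b ∉ T := Finset.mem_compl.mp hbTc
  set A : Finset (Fin n) := insert b (T.erase a) with hA_def
  have hbe : b ∉ T.erase a := fun h => hbT (Finset.mem_of_mem_erase h)
  have hA : A.card = t := by
    rw [hA_def, Finset.card_insert_of_notMem hbe, Finset.card_erase_of_mem haT, hT]
    omega
  have hmemA : ∀ i : Fin n, i ∈ A ↔ (i = b ∨ (i ∈ T ∧ i ≠ a)) := by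
    intro i
    rw [hA_def, Finset.mem_insert, Finset.mem_erase]
    tauto
  have hab : a ≠ b := fun h => hbT (h ▸ haT)
  have haA : a ∉ A := by
    rw [hmemA]
    rintro (h | ⟨-, h⟩) <;> [exact hab h; exact h rfl]
  have hbA : b ∈ A := Finset.mem_insert_self _ _
  -- inverse of the row embedding
  have hrowsymm : ∀ (j : Fin t) (h : (T.orderEmbOfFin hT j : Fin n) ∈ T),
      (T.orderIsoOfFin hT).symm ⟨T.orderEmbOfFin hT j, h⟩ = j := by
    intro j h
    rw [OrderIso.symm_apply_eq]
    exact Subtype.ext (Finset.coe_orderIsoOfFin_apply T hT j)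
  have hcolsymm : ∀ (j : Fin (n - t)) (h : (Tᶜ.orderEmbOfFin hTc j : Fin n) ∈ Tᶜ),
      (Tᶜ.orderIsoOfFin hTc).symm ⟨Tᶜ.orderEmbOfFin hTc j, h⟩ = j := by
    intro j h
    rw [OrderIso.symm_apply_eq]
    exact Subtype.ext (Finset.coe_orderIsoOfFin_apply Tᶜ hTc j)
  have hrowE_inj : Function.Injective (T.orderEmbOfFin hT) := (T.orderEmbOfFin hT).injective
  have hcolE_inj : Function.Injective (Tᶜ.orderEmbOfFin hTc) := (Tᶜ.orderEmbOfFin hTc).injective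
  -- membership of row images
  have hrow_memA : ∀ j : Fin t, j ≠ q → (T.orderEmbOfFin hT j : Fin n) ∈ A := by
    intro j hj
    rw [hmemA]
    exact Or.inr ⟨Finset.orderEmbOfFin_mem T hT j, fun h => hj (hrowE_inj h)⟩
  -- injectivity of decFun
  have hdec_inj : Function.Injective (decFun (Q := Q) T hT A q) := by
    intro w w' h
    funext i
    rcases eq_q_or_embq ht q i with rfl | ⟨j, rfl⟩
    · have := congr_fun h ⟨b, hbA⟩
      simpa [decFun, hbT] using this
    · have hmem := hrow_memA (embq ht q j) (embq_ne ht q j)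
      have := congr_fun h ⟨T.orderEmbOfFin hT (embq ht q j), hmem⟩
      have hmemT : (T.orderEmbOfFin hT (embq ht q j) : Fin n) ∈ T :=
        Finset.orderEmbOfFin_mem T hT _
      simpa [decFun, hmemT, hrowsymm] using this
  -- injectivity of gFun
  have hg_inj : Function.Injective (gFun (Q := Q) (k := k) ht hkt1 T hTc A q) := by
    intro z z' h
    have h1 := congr_arg Prod.fst h
    have h2 := congr_arg Prod.snd h
    funext i
    rcases eq_q_or_embq ht q i with rfl | ⟨j, rfl⟩
    · have haTc : a ∉ Tᶜ := by simpa [Finset.mem_compl] using haT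
      have := congr_fun h2 ⟨a, haA⟩
      simpa [gFun, haT, haTc] using this
    · by_cases hjk : j.val < k
      · have := congr_fun h1 ⟨j.val, hjk⟩
        have hcast : Fin.castLE hkt1 (⟨j.val, hjk⟩ : Fin k) = j := Fin.ext rfl
        simpa [gFun, hcast] using this
      · have hjlt : j.val < t - 1 := j.isLt
        set j0 : Fin (n - t) := ⟨j.val - k, by omega⟩ with hj0_def
        have hj0b : (Tᶜ.orderEmbOfFin hTc j0 : Fin n) ≠ b := by
          intro hcon
          have : j0 = bIdx := hcolE_inj hcon
          have := congr_arg Fin.val this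
          simp [hj0_def, hbIdx_def] at this
          omega
        have hj0Tc : (Tᶜ.orderEmbOfFin hTc j0 : Fin n) ∈ Tᶜ := Finset.orderEmbOfFin_mem _ _ _
        have hj0T : (Tᶜ.orderEmbOfFin hTc j0 : Fin n) ∉ T := Finset.mem_compl.mp hj0Tc
        have hj0A : (Tᶜ.orderEmbOfFin hTc j0 : Fin n) ∉ A := by
          rw [hmemA]
          rintro (h | ⟨h, -⟩) <;> [exact hj0b h; exact hj0T h]
        have hcond : k + j0.val < t - 1 := by
          simp only [hj0_def]
          omega
        have heq := congr_fun h2 ⟨Tᶜ.orderEmbOfFin hTc j0, hj0A⟩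
        have hfin : (⟨k + j0.val, hcond⟩ : Fin (t - 1)) = j := by
          apply Fin.ext
          simp only [hj0_def]
          omega
        simpa [gFun, hj0Tc, hj0T, hcolsymm j0 hj0Tc, hcond, hfin] using heq
  -- cardinalities
  have hcard : Fintype.card (Fin t → Fin Q)
      = Fintype.card ((Fin k → Fin Q) × ({i // i ∉ A} → Fin Q)) := by
    have h2 : Fintype.card {i // i ∈ A} = t := by
      rw [Fintype.card_coe, hA]
    have h1 : Fintype.card {i // i ∉ A} = n - t := by
      rw [Fintype.card_subtype_compl, Fintype.card_fin, h2]
    simp only [Fintype.card_prod, Fintype.card_fun, Fintype.card_fin, h1]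
    rw [← pow_add]
    congr 1
    omega
  have hg_bij : Function.Bijective (gFun (Q := Q) (k := k) ht hkt1 T hTc A q) :=
    (Fintype.bijective_iff_injective_and_card _).mpr ⟨hg_inj, hcard⟩
  -- evaluation of the merged string on row positions
  have hrow_eval : ∀ (w z : Fin t → Fin Q) (j : Fin t),
      mergeOn A (decFun T hT A q w) ((gFun (Q := Q) (k := k) ht hkt1 T hTc A q z).2)
          (T.orderEmbOfFin hT j)
        = Function.update w q (z q) j := by
    intro w z j
    by_cases hj : j = q
    · subst hj
      have haTc : a ∉ Tᶜ := by simpa [Finset.mem_compl] using haT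
      simp only [mergeOn, ← ha_def, dif_neg haA, gFun, haTc, dif_neg, not_false_iff,
        Function.update_self]
    · have hmem := hrow_memA j hj
      have hmemT : (T.orderEmbOfFin hT j : Fin n) ∈ T := Finset.orderEmbOfFin_mem T hT j
      simp only [mergeOn, dif_pos hmem, decFun, dif_pos hmemT, hrowsymm,
        Function.update_of_ne hj]
  -- evaluation of the merged string on column positions
  have hcol_eval : ∀ (w z : Fin t → Fin Q) (i : Fin t),
      Fin.append ((gFun (Q := Q) (k := k) ht hkt1 T hTc A q z).1)
          (fun j => mergeOn A (decFun T hT A q w)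
            ((gFun (Q := Q) (k := k) ht hkt1 T hTc A q z).2) (Tᶜ.orderEmbOfFin hTc j))
          (Fin.cast (by omega : t = k + (n - t)) i)
        = colFun ht (z ∘ embq ht q) (w q) i := by
    intro w z i
    by_cases h1 : i.val < k
    · have e1 : Fin.cast (by omega : t = k + (n - t)) i
          = Fin.castAdd (n - t) (⟨i.val, h1⟩ : Fin k) := Fin.ext rfl
      rw [e1, Fin.append_left]
      have hlt : i.val < t - 1 := by omega
      have e2 : Fin.cast (by omega : t = t - 1 + 1) i
          = Fin.castSucc (⟨i.val, hlt⟩ : Fin (t - 1)) := Fin.ext rfl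
      show _ = Fin.snoc (α := fun _ => Fin Q) (z ∘ embq ht q) (w q)
        (Fin.cast (by omega : t = t - 1 + 1) i)
      rw [e2, Fin.snoc_castSucc]
      show z (embq ht q (Fin.castLE hkt1 ⟨i.val, h1⟩)) = z (embq ht q ⟨i.val, hlt⟩)
      congr 1
    · by_cases h2 : i.val < t - 1
      · have hj0lt : i.val - k < n - t := by omega
        set j0 : Fin (n - t) := ⟨i.val - k, hj0lt⟩ with hj0_def
        have e1 : Fin.cast (by omega : t = k + (n - t)) i = Fin.natAdd k j0 := by
          apply Fin.ext
          simp only [Fin.natAdd, Fin.cast, hj0_def]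
          omega
        rw [e1, Fin.append_right]
        have hj0b : (Tᶜ.orderEmbOfFin hTc j0 : Fin n) ≠ b := by
          intro hcon
          have : j0 = bIdx := hcolE_inj hcon
          have := congr_arg Fin.val this
          simp [hj0_def, hbIdx_def] at this
          omega
        have hj0Tc : (Tᶜ.orderEmbOfFin hTc j0 : Fin n) ∈ Tᶜ := Finset.orderEmbOfFin_mem _ _ _
        have hj0T : (Tᶜ.orderEmbOfFin hTc j0 : Fin n) ∉ T := Finset.mem_compl.mp hj0Tc
        have hj0A : (Tᶜ.orderEmbOfFin hTc j0 : Fin n) ∉ A := by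
          rw [hmemA]
          rintro (h | ⟨h, -⟩) <;> [exact hj0b h; exact hj0T h]
        have hcond : k + j0.val < t - 1 := by
          simp only [hj0_def]
          omega
        have e2 : Fin.cast (by omega : t = t - 1 + 1) i
            = Fin.castSucc (⟨i.val, h2⟩ : Fin (t - 1)) := Fin.ext rfl
        show _ = Fin.snoc (α := fun _ => Fin Q) (z ∘ embq ht q) (w q)
          (Fin.cast (by omega : t = t - 1 + 1) i)
        rw [e2, Fin.snoc_castSucc]
        simp only [mergeOn, dif_neg hj0A, gFun, dif_pos hj0Tc, hcolsymm j0 hj0Tc, hcond,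
          dif_pos]
        show z (embq ht q ⟨k + j0.val, hcond⟩) = z (embq ht q ⟨i.val, h2⟩)
        have hfin : (⟨k + j0.val, hcond⟩ : Fin (t - 1)) = ⟨i.val, h2⟩ := by
          apply Fin.ext
          show k + (i.val - k) = i.val
          omega
        rw [hfin]
      · have hival : i.val = t - 1 := by omega
        have e1 : Fin.cast (by omega : t = k + (n - t)) i = Fin.natAdd k bIdx := by
          apply Fin.ext
          simp only [Fin.natAdd, Fin.cast, hbIdx_def]
          omega
        rw [e1, Fin.append_right]
        have e2 : Fin.cast (by omega : t = t - 1 + 1) i = Fin.last (t - 1) := by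
          apply Fin.ext
          simp only [Fin.cast, Fin.last]
          omega
        show _ = Fin.snoc (α := fun _ => Fin Q) (z ∘ embq ht q) (w q)
          (Fin.cast (by omega : t = t - 1 + 1) i)
        rw [e2, Fin.snoc_last]
        simp only [mergeOn, ← hb_def, dif_pos hbA, decFun, dif_neg hbT]
  -- pointwise identification of Φ with Utilde
  have hpoint : ∀ (w z : Fin t → Fin Q),
      Φ ((gFun (Q := Q) (k := k) ht hkt1 T hTc A q z).1)
          (mergeOn A (decFun T hT A q w) ((gFun (Q := Q) (k := k) ht hkt1 T hTc A q z).2))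
        = (Real.sqrt ((Q : ℝ) ^ t) : ℂ)⁻¹ * Utilde ht q U w z := by
    intro w z
    rw [hUstd]
    congr 1
    show U _ _ = U (Function.update w q (z q)) (colFun ht (z ∘ embq ht q) (w q))
    congr 1
    · funext j
      exact hrow_eval w z j
    · funext i
      exact hcol_eval w z i
  -- extract the entrywise identity from uniformity
  have hE : ∀ u v : {i // i ∈ A} → Fin Q,
      (∑ s : Fin k → Fin Q, ∑ wb : {i // i ∉ A} → Fin Q,
        Φ s (mergeOn A u wb) * (starRingEnd ℂ) (Φ s (mergeOn A v wb)))
      = ((Q : ℂ) ^ t)⁻¹ * (if u = v then 1 else 0) := by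
    intro u v
    have h := huniform A hA
    have := congr_fun (congr_fun h u) v
    simpa [rdm, Matrix.smul_apply, Matrix.one_apply, smul_eq_mul] using this
  -- main entrywise computation
  ext w w'
  rw [Matrix.mul_apply, Matrix.one_apply]
  simp only [Matrix.conjTranspose_apply, RCLike.star_def]
  have main : ((Q : ℂ) ^ t)⁻¹ *
      (∑ z : Fin t → Fin Q, Utilde ht q U w z * (starRingEnd ℂ) (Utilde ht q U w' z))
      = ((Q : ℂ) ^ t)⁻¹ * (if w = w' then 1 else 0) := by
    calc ((Q : ℂ) ^ t)⁻¹ *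
        (∑ z : Fin t → Fin Q, Utilde ht q U w z * (starRingEnd ℂ) (Utilde ht q U w' z))
        = ∑ z : Fin t → Fin Q, ((Q : ℂ) ^ t)⁻¹ *
            (Utilde ht q U w z * (starRingEnd ℂ) (Utilde ht q U w' z)) := by
          rw [Finset.mul_sum]
      _ = ∑ z : Fin t → Fin Q,
            Φ ((gFun (Q := Q) (k := k) ht hkt1 T hTc A q z).1)
              (mergeOn A (decFun T hT A q w)
                ((gFun (Q := Q) (k := k) ht hkt1 T hTc A q z).2))
            * (starRingEnd ℂ) (Φ ((gFun (Q := Q) (k := k) ht hkt1 T hTc A q z).1)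
              (mergeOn A (decFun T hT A q w')
                ((gFun (Q := Q) (k := k) ht hkt1 T hTc A q z).2))) := by
          refine Finset.sum_congr rfl fun z _ => ?_
          rw [hpoint w z, hpoint w' z, map_mul, conj_real_inv, mul_mul_mul_comm,
            sqrt_pow_inv_mul]
      _ = ∑ p : (Fin k → Fin Q) × ({i // i ∉ A} → Fin Q),
            Φ p.1 (mergeOn A (decFun T hT A q w) p.2)
            * (starRingEnd ℂ) (Φ p.1 (mergeOn A (decFun T hT A q w') p.2)) := by
          exact Fintype.sum_bijective _ hg_bij _ _ (fun z => rfl)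
      _ = ∑ s : Fin k → Fin Q, ∑ wb : {i // i ∉ A} → Fin Q,
            Φ s (mergeOn A (decFun T hT A q w) wb)
            * (starRingEnd ℂ) (Φ s (mergeOn A (decFun T hT A q w') wb)) := by
          rw [Fintype.sum_prod_type]
      _ = ((Q : ℂ) ^ t)⁻¹ * (if decFun T hT A q w = decFun T hT A q w' then 1 else 0) :=
          hE _ _
      _ = ((Q : ℂ) ^ t)⁻¹ * (if w = w' then 1 else 0) := by
          congr 1
          by_cases h : w = w'
          · simp [h]
          · rw [if_neg h, if_neg (fun hc => h (hdec_inj hc))]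
  exact mul_left_cancel₀ (inv_ne_zero hQt0) main

set_option maxHeartbeats 1600000 in
/-- Lemma 2.6.  For a `t`-uniform state with `T`-standard-form unitary `U`,
the vectors `ω_{s'}` are orthonormal, and for every position `p` of the `t+1` qudits and every
single-qudit operator `γ` there is a scalar `c` (independent of `s', s''`) with
`⟨ω_{s'}, Γ ω_{s''}⟩ = c · δ_{s',s''}`; hence their span is a `[[t+1, t-1]]_Q` quantum MDS code
of distance 2. -/
theorem stmt_2 (Q t n : ℕ) (hQ : 2 ≤ Q) (ht : 1 < t) (htn : t < n) (hn : n ≤ 2 * t)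
    (k : ℕ) (hk : k = 2 * t - n)
    (Φ : (Fin k → Fin Q) → (Fin n → Fin Q) → ℂ)
    (hnorm : ∑ s : Fin k → Fin Q, ∑ w : Fin n → Fin Q,
      Φ s w * (starRingEnd ℂ) (Φ s w) = 1)
    (huniform : TUniform t Φ)
    (T : Finset (Fin n)) (hT : T.card = t) (hTc : Tᶜ.card = n - t)
    (U : Matrix (Fin t → Fin Q) (Fin t → Fin Q) ℂ)
    (hUuni : U ∈ Matrix.unitaryGroup (Fin t → Fin Q) ℂ)
    (hUstd : ∀ (s : Fin k → Fin Q) (w : Fin n → Fin Q),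
      Φ s w = (Real.sqrt ((Q : ℝ) ^ t) : ℂ)⁻¹ *
        U (fun i => w (T.orderEmbOfFin hT i))
          (fun i => Fin.append s (fun j => w (Tᶜ.orderEmbOfFin hTc j))
            (Fin.cast (by omega : t = k + (n - t)) i))) :
    -- orthonormality of the ω's
    (∀ s' s'' : Fin (t - 1) → Fin Q,
      (∑ v : Fin (t + 1) → Fin Q,
          (starRingEnd ℂ) (omegaVec ht U s' v) * omegaVec ht U s'' v)
        = if s' = s'' then 1 else 0) ∧
    -- the Knill–Laflamme (distance-2) condition for every single-qudit operator
    (∀ (p : Fin (t + 1)) (γ : Matrix (Fin Q) (Fin Q) ℂ), ∃ c : ℂ,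
      ∀ s' s'' : Fin (t - 1) → Fin Q,
        (∑ v : Fin (t + 1) → Fin Q,
            (starRingEnd ℂ) (omegaVec ht U s' v) *
              (∑ m : Fin Q, γ (v p) m * omegaVec ht U s'' (Function.update v p m)))
          = if s' = s'' then c else 0) := by
  classical
  have hQ0 : (Q : ℂ) ≠ 0 := by
    exact_mod_cast (Nat.cast_ne_zero (R := ℂ)).mpr (by omega)
  have homega : ∀ (s' : Fin (t - 1) → Fin Q) (u : Fin t → Fin Q) (r : Fin Q),
      omegaVec ht U s' (Fin.snoc (α := fun _ => Fin Q) u r)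
        = (Real.sqrt (Q : ℝ) : ℂ)⁻¹ * U u (colFun ht s' r) := by
    intro s' u r
    simp only [omegaVec, Fin.snoc_castSucc, Fin.snoc_last]
    rfl
  constructor
  · -- orthonormality
    intro s' s''
    rw [sum_snoc (fun v => (starRingEnd ℂ) (omegaVec ht U s' v) * omegaVec ht U s'' v)]
    have hpt : ∀ p : (Fin t → Fin Q) × Fin Q,
        (starRingEnd ℂ) (omegaVec ht U s' (Fin.snoc (α := fun _ => Fin Q) p.1 p.2)) *
          omegaVec ht U s'' (Fin.snoc (α := fun _ => Fin Q) p.1 p.2)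
        = (Q : ℂ)⁻¹ * ((starRingEnd ℂ) (U p.1 (colFun ht s' p.2)) * U p.1 (colFun ht s'' p.2)) := by
      intro p
      rw [homega, homega, map_mul, conj_real_inv, mul_mul_mul_comm, sqrt_inv_mul]
    rw [Finset.sum_congr rfl (fun p _ => hpt p), ← Finset.mul_sum, Fintype.sum_prod_type,
      Finset.sum_comm]
    have hcol : ∀ r : Fin Q,
        ∑ u : Fin t → Fin Q,
          (starRingEnd ℂ) (U u (colFun ht s' r)) * U u (colFun ht s'' r)
        = if s' = s'' then 1 else 0 := by
      intro r
      rw [col_orth U hUuni]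
      by_cases h : s' = s''
      · simp [h]
      · rw [if_neg h, if_neg (fun hc => h ((colFun_inj ht _ _ _ _).mp hc).1)]
    rw [Finset.sum_congr rfl (fun r _ => hcol r)]
    by_cases h : s' = s''
    · simp only [if_pos h, Finset.sum_const, Finset.card_univ, Fintype.card_fin,
        nsmul_eq_mul, mul_one]
      exact inv_mul_cancel₀ hQ0
    · simp [h]
  · -- Knill–Laflamme
    intro p γ
    refine ⟨(Q : ℂ)⁻¹ * ∑ x : Fin Q, γ x x, ?_⟩
    intro s' s''
    rcases Fin.eq_castSucc_or_eq_last p with ⟨q, rfl⟩ | rfl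
    · -- p among the first t qudits : needs t-uniformity
      have hMt := Utilde_unitary Q t n hQ ht htn hn k hk Φ huniform T hT hTc U hUstd q
      have horthV : ∀ (x m : Fin Q) (a b : Fin (t - 1) → Fin Q),
          ∑ w2 : Fin t → Fin Q,
            (starRingEnd ℂ) (Utilde ht q U w2 (encq ht q x a)) *
              Utilde ht q U w2 (encq ht q m b)
          = if x = m ∧ a = b then 1 else 0 := by
        intro x m a b
        rw [row_orth _ hMt]
        simp only [encq_inj]
      have hUt1 : ∀ (u : Fin t → Fin Q) (r x : Fin Q) (c : Fin (t - 1) → Fin Q),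
          Utilde ht q U (Function.update u q r) (encq ht q x c)
            = U (Function.update u q x) (colFun ht c r) := by
        intro u r x c
        show U (Function.update (Function.update u q r) q (encq ht q x c q))
          (colFun ht ((encq ht q x c) ∘ embq ht q) (Function.update u q r q)) = _
        rw [encq_q, Function.update_idem, Function.update_self]
        congr 1
        funext j
        simp only [colFun]
        congr 1
        funext j'
        exact encq_emb ht q x c j'
      have hUt1' : ∀ (u : Fin t → Fin Q) (r : Fin Q) (c : Fin (t - 1) → Fin Q),
          Utilde ht q U (Function.update u q r) (encq ht q (u q) c) = U u (colFun ht c r) := by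
        intro u r c
        rw [hUt1, Function.update_eq_self]
      rw [sum_snoc]
      have hpt : ∀ pp : (Fin t → Fin Q) × Fin Q,
          (starRingEnd ℂ) (omegaVec ht U s' (Fin.snoc (α := fun _ => Fin Q) pp.1 pp.2)) *
            (∑ m : Fin Q, γ ((Fin.snoc (α := fun _ => Fin Q) pp.1 pp.2) q.castSucc) m *
              omegaVec ht U s''
                (Function.update (Fin.snoc (α := fun _ => Fin Q) pp.1 pp.2) q.castSucc m))
          = (Q : ℂ)⁻¹ * ∑ m : Fin Q, γ ((Function.update pp.1 q pp.2, pp.1 q).2) m *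
              ((starRingEnd ℂ)
                  ((fun w2 x c => Utilde ht q U w2 (encq ht q x c))
                    (Function.update pp.1 q pp.2, pp.1 q).1
                    (Function.update pp.1 q pp.2, pp.1 q).2 s') *
                (fun w2 x c => Utilde ht q U w2 (encq ht q x c))
                  (Function.update pp.1 q pp.2, pp.1 q).1 m s'') := by
        rintro ⟨u, r⟩
        simp only [Fin.snoc_castSucc, update_snoc_castSucc]
        rw [homega, map_mul, conj_real_inv]
        have hterm : ∀ m : Fin Q,
            γ (u q) m * omegaVec ht U s''
              (Fin.snoc (α := fun _ => Fin Q) (Function.update u q m) r)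
            = γ (u q) m * ((Real.sqrt (Q : ℝ) : ℂ)⁻¹ *
                U (Function.update u q m) (colFun ht s'' r)) := by
          intro m
          rw [homega]
        rw [Finset.sum_congr rfl fun m _ => hterm m]
        rw [Finset.mul_sum, Finset.mul_sum]
        refine Finset.sum_congr rfl fun m _ => ?_
        rw [hUt1', hUt1]
        ring_nf
        rw [show ((Real.sqrt (Q : ℝ) : ℂ))⁻¹ ^ 2 = (Q : ℂ)⁻¹ from by
          rw [sq]; exact sqrt_inv_mul]
        ring
      rw [Finset.sum_congr rfl (fun pp _ => hpt pp)]
      have hinvol : Function.Involutive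
          (fun pp : (Fin t → Fin Q) × Fin Q => (Function.update pp.1 q pp.2, pp.1 q)) := by
        rintro ⟨u, r⟩
        simp [Function.update_idem, Function.update_self, Function.update_eq_self]
      rw [Fintype.sum_bijective _ hinvol.bijective _
        (fun pp : (Fin t → Fin Q) × Fin Q => (Q : ℂ)⁻¹ * ∑ m : Fin Q, γ pp.2 m *
          ((starRingEnd ℂ) (Utilde ht q U pp.1 (encq ht q pp.2 s')) *
            Utilde ht q U pp.1 (encq ht q m s''))) (fun pp => rfl)]
      exact kl_combined γ (fun w2 x c => Utilde ht q U w2 (encq ht q x c)) _ horthV s' s''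
    · -- p is the last qudit : unitarity suffices
      have horthV : ∀ (x m : Fin Q) (a b : Fin (t - 1) → Fin Q),
          ∑ u : Fin t → Fin Q,
            (starRingEnd ℂ) (U u (colFun ht a x)) * U u (colFun ht b m)
          = if x = m ∧ a = b then 1 else 0 := by
        intro x m a b
        rw [col_orth U hUuni]
        by_cases h : colFun ht a x = colFun ht b m
        · rw [if_pos h, if_pos]
          obtain ⟨h1, h2⟩ := (colFun_inj ht _ _ _ _).mp h
          exact ⟨h2, h1⟩
        · rw [if_neg h, if_neg]
          rintro ⟨rfl, rfl⟩
          exact h rfl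
      rw [sum_snoc]
      have hpt : ∀ pp : (Fin t → Fin Q) × Fin Q,
          (starRingEnd ℂ) (omegaVec ht U s' (Fin.snoc (α := fun _ => Fin Q) pp.1 pp.2)) *
            (∑ m : Fin Q, γ ((Fin.snoc (α := fun _ => Fin Q) pp.1 pp.2) (Fin.last t)) m *
              omegaVec ht U s''
                (Function.update (Fin.snoc (α := fun _ => Fin Q) pp.1 pp.2) (Fin.last t) m))
          = (Q : ℂ)⁻¹ * ∑ m : Fin Q, γ pp.2 m *
              ((starRingEnd ℂ) ((fun u x c => U u (colFun ht c x)) pp.1 pp.2 s') *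
                (fun u x c => U u (colFun ht c x)) pp.1 m s'') := by
        rintro ⟨u, r⟩
        simp only [Fin.snoc_last, update_snoc_last]
        rw [homega, map_mul, conj_real_inv]
        have hterm : ∀ m : Fin Q,
            γ r m * omegaVec ht U s'' (Fin.snoc (α := fun _ => Fin Q) u m)
            = γ r m * ((Real.sqrt (Q : ℝ) : ℂ)⁻¹ * U u (colFun ht s'' m)) := by
          intro m
          rw [homega]
        rw [Finset.sum_congr rfl fun m _ => hterm m]
        rw [Finset.mul_sum, Finset.mul_sum]
        refine Finset.sum_congr rfl fun m _ => ?_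
        ring_nf
        rw [show ((Real.sqrt (Q : ℝ) : ℂ))⁻¹ ^ 2 = (Q : ℂ)⁻¹ from by
          rw [sq]; exact sqrt_inv_mul]
        ring
      rw [Finset.sum_congr rfl (fun pp _ => hpt pp)]
      exact kl_combined γ (fun u x c => U u (colFun ht c x)) _ horthV s' s''
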